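/- Let n ≥ 1 and N ≥ 2, and suppose 2^{ℵ₀} ≤ ℵ_n. Then for any n + 2 distinct noncollinear points a_1, ..., a_{n+2} in ℝ^N, there exist clouds C_1, ..., C_{n+2} with C_i a cloud around a_i whose union is ℝ^N. -/

import Mathlib

open Cardinal

section Closure
variable {ι : Type} {P : Type} {X : ι → Type} (f : ∀ i, P → X i)

def stepSet (S : Set P) : Set P :=
  S ∪ {z | ∃ x ∈ S, ∃ y ∈ S, ∃ i j, i ≠ j ∧ f i z = f i x ∧ f j z = f j y}

def clSet (S : Set P) : Set P := ⋃ m : ℕ, (stepSet f)^[m] S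

lemma subset_stepSet (S : Set P) : S ⊆ stepSet f S := Set.subset_union_left

lemma stepSet_mono {S T : Set P} (h : S ⊆ T) : stepSet f S ⊆ stepSet f T := by
  apply Set.union_subset_union h
  rintro z ⟨x, hx, y, hy, i, j, hij, h1, h2⟩
  exact ⟨x, h hx, y, h hy, i, j, hij, h1, h2⟩

lemma iter_mono_le {S : Set P} {m m' : ℕ} (h : m ≤ m') :
    (stepSet f)^[m] S ⊆ (stepSet f)^[m'] S := by
  induction m' with
  | zero => simp_all
  | succ m' ih =>
    rcases Nat.lt_or_ge m (m' + 1) with h' | h'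
    · refine (ih (by omega)).trans ?_
      rw [Function.iterate_succ_apply']
      exact subset_stepSet f _
    · have : m = m' + 1 := by omega
      subst this; rfl

lemma subset_clSet (S : Set P) : S ⊆ clSet f S :=
  Set.subset_iUnion_of_subset 0 (by rfl)

lemma clSet_mono {S T : Set P} (h : S ⊆ T) : clSet f S ⊆ clSet f T := by
  refine Set.iUnion_mono fun m => ?_
  induction m with
  | zero => exact h
  | succ m ih =>
    rw [Function.iterate_succ_apply', Function.iterate_succ_apply']
    exact stepSet_mono f ih

lemma clSet_closed {S : Set P} {x y z : P} {i j : ι} (hx : x ∈ clSet f S)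
    (hy : y ∈ clSet f S) (hij : i ≠ j) (h1 : f i z = f i x) (h2 : f j z = f j y) :
    z ∈ clSet f S := by
  obtain ⟨m, hm⟩ := Set.mem_iUnion.mp hx
  obtain ⟨m', hm'⟩ := Set.mem_iUnion.mp hy
  have hxa : x ∈ (stepSet f)^[max m m'] S := iter_mono_le f (le_max_left _ _) hm
  have hya : y ∈ (stepSet f)^[max m m'] S := iter_mono_le f (le_max_right _ _) hm'
  refine Set.mem_iUnion.mpr ⟨max m m' + 1, ?_⟩
  rw [Function.iterate_succ_apply']
  exact Or.inr ⟨x, hxa, y, hya, i, j, hij, h1, h2⟩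

variable [Fintype ι]

lemma mk_stepSet_le (hinj : ∀ i j, i ≠ j → ∀ x y : P, f i x = f i y → f j x = f j y → x = y)
    {S : Set P} {μ : Cardinal} (hμ : ℵ₀ ≤ μ) (hS : #S ≤ μ) : #(stepSet f S) ≤ μ := by
  classical
  have hι : #ι ≤ μ := (lt_aleph0_of_finite ι).le.trans hμ
  set Z := {z | ∃ x ∈ S, ∃ y ∈ S, ∃ i j, i ≠ j ∧ f i z = f i x ∧ f j z = f j y} with hZdef
  have hprod : #(↥S × ↥S × ι × ι) ≤ μ := by
    have : #(↥S × ↥S × ι × ι) = #S * (#S * (#ι * #ι)) := by simp [Cardinal.mk_prod]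
    rw [this]
    calc #S * (#S * (#ι * #ι)) ≤ μ * (μ * (μ * μ)) := by
          exact mul_le_mul' hS (mul_le_mul' hS (mul_le_mul' hι hι))
      _ = μ := by rw [Cardinal.mul_eq_self hμ, Cardinal.mul_eq_self hμ, Cardinal.mul_eq_self hμ]
  have hZ : #Z ≤ μ := by
    have hsub : Z ⊆ ⋃ p : ↥S × ↥S × ι × ι,
        {z | p.2.2.1 ≠ p.2.2.2 ∧ f p.2.2.1 z = f p.2.2.1 p.1.1 ∧ f p.2.2.2 z = f p.2.2.2 p.2.1.1} := by
      rintro z ⟨x, hx, y, hy, i, j, hij, h1, h2⟩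
      exact Set.mem_iUnion.mpr ⟨⟨⟨x, hx⟩, ⟨y, hy⟩, i, j⟩, hij, h1, h2⟩
    have hsing : ∀ p : ↥S × ↥S × ι × ι,
        #({z | p.2.2.1 ≠ p.2.2.2 ∧ f p.2.2.1 z = f p.2.2.1 p.1.1 ∧ f p.2.2.2 z = f p.2.2.2 p.2.1.1} : Set P) ≤ 1 := by
      intro p
      rw [Cardinal.mk_le_one_iff_set_subsingleton]
      rintro z1 ⟨hij, h1, h2⟩ z2 ⟨_, h1', h2'⟩
      exact hinj _ _ hij z1 z2 (h1.trans h1'.symm) (h2.trans h2'.symm)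
    calc #Z ≤ #(⋃ p : ↥S × ↥S × ι × ι, _) := Cardinal.mk_le_mk_of_subset hsub
      _ ≤ #(↥S × ↥S × ι × ι) * ⨆ p, _ := Cardinal.mk_iUnion_le _
      _ ≤ μ * 1 := mul_le_mul' hprod (ciSup_le' hsing)
      _ ≤ μ := by simp
  calc #(stepSet f S) ≤ #S + #Z := Cardinal.mk_union_le _ _
    _ ≤ μ + μ := add_le_add hS hZ
    _ = μ := Cardinal.add_eq_self hμ

lemma mk_clSet_le (hinj : ∀ i j, i ≠ j → ∀ x y : P, f i x = f i y → f j x = f j y → x = y)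
    {S : Set P} {μ : Cardinal} (hμ : ℵ₀ ≤ μ) (hS : #S ≤ μ) : #(clSet f S) ≤ μ := by
  have hiter : ∀ m : ℕ, #((stepSet f)^[m] S) ≤ μ := by
    intro m
    induction m with
    | zero => exact hS
    | succ m ih => rw [Function.iterate_succ_apply']; exact mk_stepSet_le f hinj hμ ih
  calc #(clSet f S) ≤ #ℕ * ⨆ m, #((stepSet f)^[m] S) := by
        simpa [clSet] using Cardinal.mk_iUnion_le fun m : ℕ => (stepSet f)^[m] S
    _ ≤ μ * μ := mul_le_mul' (by simpa using hμ) (ciSup_le' hiter)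
    _ = μ := Cardinal.mul_eq_self hμ
end Closure

theorem lemmaA : ∀ (k : ℕ) (ι : Type) [Fintype ι], k + 2 ≤ Fintype.card ι →
    ∀ (P : Type) (X : ι → Type) (f : ∀ i, P → X i),
    (∀ i j, i ≠ j → ∀ x y : P, f i x = f i y → f j x = f j y → x = y) →
    Cardinal.mk P ≤ Cardinal.aleph k →
    ∃ σ : P → ι, ∀ (i : ι) (ℓ : X i), {x | σ x = i ∧ f i x = ℓ}.Finite := by
  intro k
  induction k with
  | zero =>
    intro ι _ hι P X f hinj hP
    classical
    obtain ⟨i₁, i₂, h12⟩ := Fintype.exists_pair_of_one_lt_card (α := ι) (by omega)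
    have hcnt : Countable P := by
      have : Cardinal.aleph (0:ℕ) = Cardinal.aleph0 := by
        simp [Cardinal.aleph_zero]
      rw [this] at hP
      exact Cardinal.mk_le_aleph0_iff.mp hP
    obtain ⟨g, hg⟩ := hcnt.exists_injective_nat'
    -- rank of the i-fiber of x
    set r : ι → P → ℕ := fun i x => sInf (g '' {y | f i y = f i x}) with hr
    have hrmem : ∀ i x, r i x ∈ g '' {y | f i y = f i x} :=
      fun i x => Nat.sInf_mem ⟨g x, x, rfl, rfl⟩
    have hrconst : ∀ i (x y : P), f i x = f i y → r i x = r i y := by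
      intro i x y h; simp only [hr, h]
    have hrdet : ∀ i (x y : P), r i x = r i y → f i x = f i y := by
      intro i x y h
      obtain ⟨z, hz, hgz⟩ := hrmem i x
      obtain ⟨z', hz', hgz'⟩ := hrmem i y
      have : z = z' := hg (by rw [hgz, hgz', h])
      subst this
      rw [← hz, hz']
    set σ : P → ι := fun x => if r i₂ x ≤ r i₁ x then i₁ else i₂ with hσ
    -- key finiteness
    have key : ∀ (j₁ j₂ : ι), j₁ ≠ j₂ → ∀ ℓ : X j₁, {x | f j₁ x = ℓ ∧ r j₂ x ≤ r j₁ x}.Finite := by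
      intro j₁ j₂ hne ℓ
      rcases Set.eq_empty_or_nonempty {x | f j₁ x = ℓ ∧ r j₂ x ≤ r j₁ x} with he | ⟨x₀, hx₀⟩
      · simp [he]
      have hInj : Set.InjOn (r j₂) {x | f j₁ x = ℓ ∧ r j₂ x ≤ r j₁ x} := by
        rintro x ⟨hx1, _⟩ y ⟨hy1, _⟩ hxy
        exact hinj j₂ j₁ (Ne.symm hne) x y (hrdet _ _ _ hxy) (hx1.trans hy1.symm)
      have hBdd : (r j₂) '' {x | f j₁ x = ℓ ∧ r j₂ x ≤ r j₁ x} ⊆ Set.Iic (r j₁ x₀) := by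
        rintro m ⟨x, ⟨hx1, hx2⟩, rfl⟩
        exact hx2.trans (le_of_eq (hrconst _ _ _ (hx1.trans hx₀.1.symm)))
      exact Set.Finite.of_finite_image ((Set.finite_Iic _).subset hBdd) hInj
    refine ⟨σ, fun i ℓ => ?_⟩
    by_cases h1 : i = i₁
    · subst h1
      refine ((key i i₂ h12 ℓ).subset ?_)
      rintro x ⟨hσx, hfx⟩
      refine ⟨hfx, ?_⟩
      by_contra hcon
      simp only [hσ, if_neg hcon] at hσx
      exact h12 hσx.symm
    by_cases h2 : i = i₂
    · subst h2
      refine ((key i i₁ (Ne.symm h12) ℓ).subset ?_)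
      rintro x ⟨hσx, hfx⟩
      refine ⟨hfx, ?_⟩
      by_contra hcon
      push_neg at hcon
      simp only [hσ, if_pos hcon.le] at hσx
      exact h12 hσx
    · convert Set.finite_empty
      ext x
      simp only [Set.mem_setOf_eq, Set.mem_empty_iff_false, iff_false, not_and]
      intro hσx
      exfalso
      simp only [hσ] at hσx
      split at hσx <;> [exact h1 hσx.symm; exact h2 hσx.symm]
  | succ k IH =>
    intro ι _ hι P X f hinj hP
    classical
    haveI : Nonempty ι := Fintype.card_pos_iff.mp (by omega)
    -- rank function into ordinals below (aleph (k+1)).ord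
    obtain ⟨ρ, hρinj, hρlt⟩ : ∃ ρ : P → Ordinal.{0}, Function.Injective ρ ∧
        ∀ x, ρ x < (Cardinal.aleph (k + 1 : ℕ)).ord := by
      letI : IsWellOrder (Cardinal.aleph (k + 1 : ℕ)).ord.ToType (· < ·) := isWellOrder_lt
      have h1 : #P ≤ #((Cardinal.aleph (k + 1 : ℕ)).ord.ToType) := by
        rw [Cardinal.mk_toType, Cardinal.card_ord]; exact hP
      obtain ⟨e⟩ := (Cardinal.le_def _ _).mp h1
      refine ⟨fun x => Ordinal.typein (α := (Cardinal.aleph (k + 1 : ℕ)).ord.ToType) (· < ·) (e x), ?_, ?_⟩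
      · intro x y hxy
        exact e.injective (Ordinal.typein_injective _ hxy)
      · intro x
        have := Ordinal.typein_lt_type (α := (Cardinal.aleph (k + 1 : ℕ)).ord.ToType) (· < ·) (e x)
        rwa [Ordinal.type_toType] at this
    have mk_lt : ∀ α : Ordinal.{0}, #({x | ρ x < α} : Set P) ≤ α.card := by
      intro α
      letI : IsWellOrder α.ToType (· < ·) := isWellOrder_lt
      have h : ∀ x : ({x : P | ρ x < α} : Set P), ∃ b : α.ToType,
          Ordinal.typein (α := α.ToType) (· < ·) b = ρ x.1 :=
        fun x => Ordinal.typein_surj _ (by rw [Ordinal.type_toType]; exact x.2)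
      choose F hF using h
      have hFinj : Function.Injective F := fun a b hab =>
        Subtype.ext (hρinj (by rw [← hF a, ← hF b, hab]))
      calc #({x | ρ x < α} : Set P) ≤ #α.ToType := Cardinal.mk_le_of_injective hFinj
        _ = α.card := Cardinal.mk_toType α
    have haleph_succ : Cardinal.aleph (k + 1 : ℕ) = Order.succ (Cardinal.aleph k) := by
      have : ((k + 1 : ℕ) : Ordinal) = Order.succ (k : Ordinal) := by
        rw [Nat.cast_succ, Ordinal.add_one_eq_succ]
      rw [this, Cardinal.aleph_succ]
    set PS : Ordinal → Set P := fun α => clSet f {x | ρ x < α} with hPS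
    have PSmono : ∀ {α β : Ordinal}, α ≤ β → PS α ⊆ PS β :=
      fun {α β} h => clSet_mono f (fun x hx => lt_of_lt_of_le hx h)
    have hmem1 : ∀ x : P, x ∈ PS (Order.succ (ρ x)) :=
      fun x => subset_clSet f _ (show ρ x < Order.succ (ρ x) from Order.lt_succ _)
    set stage : P → Ordinal := fun x => sInf {α | x ∈ PS α} with hstagedef
    have stage_mem : ∀ x, x ∈ PS (stage x) := fun x => csInf_mem (s := {α | x ∈ PS α}) ⟨Order.succ (ρ x), hmem1 x⟩
    have stage_le : ∀ (x : P) (α : Ordinal), x ∈ PS α → stage x ≤ α :=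
      fun x α h => csInf_le (OrderBot.bddBelow _) h
    have stage_min : ∀ (x : P) (α : Ordinal), α < stage x → x ∉ PS α :=
      fun x α h hx => absurd (stage_le x α hx) (not_le.mpr h)
    have stage_card : ∀ x : P, (stage x).card ≤ Cardinal.aleph k := by
      intro x
      have h3 : (ρ x).card ≤ Cardinal.aleph k := by
        have h := Cardinal.lt_ord.mp (hρlt x)
        rw [haleph_succ] at h
        exact Order.lt_succ_iff.mp h
      have h4 : (ρ x).card + 1 ≤ Cardinal.aleph k :=
        calc (ρ x).card + 1 ≤ Cardinal.aleph k + Cardinal.aleph k :=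
              add_le_add h3 (le_trans one_lt_aleph0.le (aleph0_le_aleph _))
          _ = Cardinal.aleph k := Cardinal.add_eq_self (aleph0_le_aleph _)
      calc (stage x).card ≤ (Order.succ (ρ x)).card := Ordinal.card_le_card (stage_le _ _ (hmem1 x))
        _ = (ρ x).card + 1 := Ordinal.card_succ _
        _ ≤ Cardinal.aleph k := h4
    have PS_card : ∀ α : Ordinal, α.card ≤ Cardinal.aleph k → #(PS α) ≤ Cardinal.aleph k := by
      intro α hα
      apply mk_clSet_le f hinj (aleph0_le_aleph _)
      exact (mk_lt α).trans hα
    -- "old" coordinates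
    set old : ι → P → Prop := fun i x => ∃ y β, β < stage x ∧ y ∈ PS β ∧ f i y = f i x with hold
    have old_unique : ∀ (x : P) (i j : ι), old i x → old j x → i = j := by
      rintro x i j ⟨y, β, hβ, hy, hfy⟩ ⟨y', β', hβ', hy', hfy'⟩
      by_contra hne
      have h1 : y ∈ PS (max β β') := PSmono (le_max_left _ _) hy
      have h2 : y' ∈ PS (max β β') := PSmono (le_max_right _ _) hy'
      have : x ∈ PS (max β β') := clSet_closed f h1 h2 hne hfy.symm hfy'.symm
      exact stage_min x _ (max_lt hβ hβ') this
    set i0 : P → ι := fun x => if h : ∃ i, old i x then h.choose else Classical.arbitrary ι with hi0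
    have old_i0 : ∀ (x : P) (i : ι), old i x → i0 x = i := by
      intro x i h
      have hex : ∃ i, old i x := ⟨i, h⟩
      simp only [hi0, dif_pos hex]
      exact old_unique x _ i hex.choose_spec h
    set D : Ordinal → ι → Set P := fun α c => {x | stage x = α ∧ i0 x = c} with hD
    have mkD : ∀ (α : Ordinal) (c : ι), #(D α c) ≤ Cardinal.aleph k := by
      intro α c
      rcases (D α c).eq_empty_or_nonempty with he | ⟨x, hx⟩
      · rw [he]; simp
      · have hsub : D α c ⊆ PS α := fun y hy => hy.1 ▸ stage_mem y
        calc #(D α c) ≤ #(PS α) := Cardinal.mk_le_mk_of_subset hsub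
          _ ≤ Cardinal.aleph k := PS_card α (hx.1 ▸ stage_card x)
    have hIH : ∀ (α : Ordinal) (c : ι), ∃ σ' : ↥(D α c) → {i : ι // i ≠ c},
        ∀ (i' : {i : ι // i ≠ c}) (ℓ : X i'.1), {d | σ' d = i' ∧ f i'.1 d.1 = ℓ}.Finite := by
      intro α c
      have hcard' : k + 2 ≤ Fintype.card {i : ι // i ≠ c} := by
        have h1 : Fintype.card {i : ι // i ≠ c} = Fintype.card ι - 1 := by
          rw [Fintype.card_subtype_compl (p := (· = c))]
          simp [Fintype.card_subtype_eq]
        omega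
      exact IH {i : ι // i ≠ c} hcard' (↥(D α c)) (fun i' => X i'.1) (fun i' d => f i'.1 d.1)
        (fun i' j' hne x y h1 h2 =>
          Subtype.ext (hinj i'.1 j'.1 (fun hc => hne (Subtype.ext hc)) x.1 y.1 h1 h2))
        (mkD α c)
    choose σfam hσfam using hIH
    set σ : P → ι := fun x => (σfam (stage x) (i0 x) ⟨x, ⟨rfl, rfl⟩⟩).1 with hσ
    have σ_ne : ∀ x : P, σ x ≠ i0 x := fun x => (σfam (stage x) (i0 x) ⟨x, ⟨rfl, rfl⟩⟩).2
    refine ⟨σ, fun i ℓ => ?_⟩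
    -- the key finiteness, for an arbitrary stage value γ'
    have key : ∀ (γ' : Ordinal) (c : ι),
        {x | stage x = γ' ∧ i0 x = c ∧ σ x = i ∧ f i x = ℓ}.Finite := by
      intro γ' c
      by_cases hc : c = i
      · subst hc
        refine Set.finite_empty.subset ?_
        rintro x ⟨-, h2, h3, -⟩
        exact absurd (h3.trans h2.symm) (σ_ne x)
      · have hne : i ≠ c := fun h => hc h.symm
        have himg : {x | stage x = γ' ∧ i0 x = c ∧ σ x = i ∧ f i x = ℓ}
            ⊆ Subtype.val '' {d : ↥(D γ' c) | σfam γ' c d = ⟨i, hne⟩ ∧ f i d.1 = ℓ} := by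
          rintro x ⟨h1, h2, h3, h4⟩
          subst h1; subst h2
          refine ⟨⟨x, ⟨rfl, rfl⟩⟩, ⟨?_, h4⟩, rfl⟩
          exact Subtype.ext h3
        exact ((hσfam γ' c ⟨i, hne⟩ ℓ).image Subtype.val).subset himg
    rcases Set.eq_empty_or_nonempty {x | σ x = i ∧ f i x = ℓ} with he | ⟨x₀, hx₀⟩
    · rw [he]; exact Set.finite_empty
    have hΓne : Set.Nonempty {β : Ordinal | ∃ y, y ∈ PS β ∧ f i y = ℓ} :=
      ⟨stage x₀, x₀, stage_mem x₀, hx₀.2⟩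
    set γ := sInf {β : Ordinal | ∃ y, y ∈ PS β ∧ f i y = ℓ} with hγ
    obtain ⟨y₀, hy₀PS, hy₀f⟩ := csInf_mem hΓne
    have stage_eq : ∀ x : P, σ x = i → f i x = ℓ → stage x = γ := by
      intro x hσx hfx
      have h1 : γ ≤ stage x := csInf_le (OrderBot.bddBelow _) ⟨x, stage_mem x, hfx⟩
      rcases h1.lt_or_eq with hlt | heq
      · exfalso
        have hol : old i x := ⟨y₀, γ, hlt, hy₀PS, hy₀f.trans hfx.symm⟩
        exact σ_ne x (hσx.trans (old_i0 x i hol).symm)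
      · exact heq.symm
    have hsub : {x | σ x = i ∧ f i x = ℓ} ⊆
        ⋃ c : ι, {x | stage x = γ ∧ i0 x = c ∧ σ x = i ∧ f i x = ℓ} := by
      rintro x ⟨h1, h2⟩
      exact Set.mem_iUnion.mpr ⟨i0 x, stage_eq x h1 h2, rfl, h1, h2⟩
    exact ((Set.finite_iUnion fun c => key γ c).subset hsub)

section Geometry
variable {V : Type} [AddCommGroup V] [Module ℝ V]

def lineThrough (b v : V) : Set V := {p | ∃ t : ℝ, p = b + t • v}

lemma self_mem_lineThrough (b v : V) : b ∈ lineThrough b v := ⟨0, by simp⟩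

lemma line_rep {b v x y : V} (hxy : x ≠ y) (hx : x ∈ lineThrough b v)
    (hy : y ∈ lineThrough b v) : lineThrough b v = lineThrough x (y - x) := by
  obtain ⟨s, rfl⟩ := hx
  obtain ⟨t, rfl⟩ := hy
  have hst : t - s ≠ 0 := by
    intro h
    apply hxy
    have : s = t := by linarith [sub_eq_zero.mp h]
    rw [this]
  ext p
  constructor
  · rintro ⟨r, rfl⟩
    refine ⟨(r - s) / (t - s), ?_⟩
    have : (b + t • v) - (b + s • v) = (t - s) • v := by
      rw [sub_smul]; abel
    rw [this, smul_smul, div_mul_cancel₀ _ hst, sub_smul]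
    abel
  · rintro ⟨u, rfl⟩
    refine ⟨s + u * (t - s), ?_⟩
    have : (b + t • v) - (b + s • v) = (t - s) • v := by
      rw [sub_smul]; abel
    rw [this, smul_smul, add_smul]
    abel

lemma line_unique {b v b' v' x y : V} (hxy : x ≠ y) (hx : x ∈ lineThrough b v)
    (hy : y ∈ lineThrough b v) (hx' : x ∈ lineThrough b' v') (hy' : y ∈ lineThrough b' v') :
    lineThrough b v = lineThrough b' v' :=
  (line_rep hxy hx hy).trans (line_rep hxy hx' hy').symm

end Geometry

def IsCloudAround {V : Type*} [AddCommGroup V] [Module ℝ V] (a : V) (C : Set V) : Prop :=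
  ∀ v : V, v ≠ 0 → ({p | ∃ t : ℝ, p = a + t • v} ∩ C).Finite

theorem clouds_at_points_of_continuum_le_aleph (n N : ℕ) (hn : 1 ≤ n) (hN : 2 ≤ N)
    (hcard : Cardinal.continuum ≤ Cardinal.aleph n)
    (a : Fin (n + 2) → (Fin N → ℝ)) (ha : Function.Injective a)
    (hcol : ¬ Collinear ℝ (Set.range a)) :
    ∃ C : Fin (n + 2) → Set (Fin N → ℝ),
      (∀ i, IsCloudAround (a i) (C i)) ∧ (⋃ i, C i) = Set.univ := by
  classical
  have hcard0 : Cardinal.continuum.{0} ≤ Cardinal.aleph.{0} n := by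
    rw [← Cardinal.lift_le, Cardinal.lift_continuum, Cardinal.lift_aleph, Ordinal.lift_natCast]
    exact hcard
  set spec : Fin (n+2) → Fin (n+2) → Set (Fin N → ℝ) := fun i j => lineThrough (a i) (a j - a i) with hspec
  have hai_spec : ∀ i j : Fin (n+2), a i ∈ spec i j := fun i j => self_mem_lineThrough _ _
  have haj_spec : ∀ i j : Fin (n+2), a j ∈ spec i j := fun i j => ⟨1, by simp⟩
  set P : Set (Fin N → ℝ) := {x | ∀ i j : Fin (n+2), i ≠ j → x ∉ spec i j} with hP
  set f : ∀ _ : Fin (n+2), ↥P → Set (Fin N → ℝ) := fun i x => lineThrough (a i) (x.1 - a i) with hf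
  have hx_f : ∀ (i : Fin (n+2)) (x : ↥P), x.1 ∈ f i x := fun i x => ⟨1, by simp⟩
  have hai_f : ∀ (i : Fin (n+2)) (x : ↥P), a i ∈ f i x := fun i x => self_mem_lineThrough _ _
  have hxai : ∀ (x : ↥P) (i : Fin (n+2)), x.1 ≠ a i := by
    intro x i hx
    obtain ⟨j, hj⟩ := exists_ne i
    exact x.2 i j (Ne.symm hj) (hx ▸ hai_spec i j)
  -- joint injectivity
  have hinj : ∀ i j : Fin (n+2), i ≠ j → ∀ x y : ↥P, f i x = f i y → f j x = f j y → x = y := by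
    intro i j hij x y hfi hfj
    by_contra hne
    have hne' : x.1 ≠ y.1 := fun h => hne (Subtype.ext h)
    have hyi : y.1 ∈ f i x := hfi ▸ hx_f i y
    have hyj : y.1 ∈ f j x := hfj ▸ hx_f j y
    by_cases hl : f i x = f j x
    · -- the common line contains a i and a j, so it is spec i j, impossible
      have haj : a j ∈ f i x := hl ▸ hai_f j x
      have haij : a i ≠ a j := fun h => hij (ha h)
      have : f i x = spec i j :=
        line_unique haij (hai_f i x) haj (hai_spec i j) (haj_spec i j)
      exact x.2 i j hij (this ▸ hx_f i x)
    · exact hl (line_unique hne' (hx_f i x) hyi (hx_f j x) hyj)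
  -- a line through a i containing a point of P is remembered by f
  have hdet : ∀ (i : Fin (n+2)) (x : ↥P) (v : Fin N → ℝ), x.1 ∈ lineThrough (a i) v →
      f i x = lineThrough (a i) v := by
    intro i x v hx
    exact line_unique (Ne.symm (hxai x i)) (hai_f i x) (hx_f i x)
      (self_mem_lineThrough _ _) hx
  -- cardinality
  have hcardP : #(↥P) ≤ Cardinal.aleph n := by
    have h1 : #(Fin N → ℝ) = Cardinal.continuum ^ (N : Cardinal) := by
      rw [Cardinal.mk_arrow]; simp [Cardinal.mk_real]
    have h2 : (Cardinal.continuum : Cardinal) ^ (N : Cardinal) ≤ Cardinal.continuum := by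
      calc (Cardinal.continuum : Cardinal) ^ (N : Cardinal)
          ≤ Cardinal.continuum ^ (Cardinal.aleph0) :=
            Cardinal.power_le_power_left Cardinal.continuum_pos.ne' (Cardinal.nat_lt_aleph0 N).le
        _ = Cardinal.continuum := Cardinal.continuum_power_aleph0
    calc #(↥P) ≤ #(Fin N → ℝ) := (Cardinal.mk_le_mk_of_subset (Set.subset_univ _)).trans (by simp)
      _ ≤ Cardinal.continuum := h1 ▸ h2
      _ ≤ Cardinal.aleph n := hcard0
  -- the assignment
  obtain ⟨σ, hσ⟩ := lemmaA n (Fin (n+2)) (by simp) (↥P) (fun _ => Set (Fin N → ℝ)) f hinj hcardP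
  -- assignment of special lines to clouds
  have hm : ∀ i j : Fin (n+2), ∃ c, i ≠ j → a c ∉ spec i j := by
    intro i j
    by_cases hij : i ≠ j
    · by_contra hcon
      push_neg at hcon
      apply hcol
      rw [collinear_iff_of_mem (Set.mem_range_self i)]
      refine ⟨a j - a i, ?_⟩
      rintro p ⟨c, rfl⟩
      obtain ⟨t, ht⟩ := (hcon c).2
      exact ⟨t, by rw [ht, vadd_eq_add]; module⟩
    · exact ⟨i, fun h => absurd h hij⟩
  choose m hm using hm
  set C : Fin (n+2) → Set (Fin N → ℝ) := fun c => (Subtype.val '' {x : ↥P | σ x = c}) ∪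
    ⋃ i : Fin (n+2), ⋃ j : Fin (n+2), ⋃ (_ : i ≠ j ∧ m i j = c), spec i j with hC
  refine ⟨C, ?_, ?_⟩
  · -- cloud condition
    intro c v hv
    have hA : (Subtype.val '' {x : ↥P | σ x = c ∧ f c x = lineThrough (a c) v}).Finite :=
      (hσ c (lineThrough (a c) v)).image _
    have hB : (⋃ i : Fin (n+2), ⋃ j : Fin (n+2), ⋃ (_ : i ≠ j ∧ m i j = c),
        (lineThrough (a c) v ∩ spec i j)).Finite := by
      refine Set.finite_iUnion fun i => Set.finite_iUnion fun j => ?_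
      by_cases hq : i ≠ j ∧ m i j = c
      · have hsub : (⋃ (_ : i ≠ j ∧ m i j = c), (lineThrough (a c) v ∩ spec i j))
            ⊆ lineThrough (a c) v ∩ spec i j := Set.iUnion_subset fun _ => subset_rfl
        refine Set.Finite.subset ?_ hsub
        apply Set.Subsingleton.finite
        intro p hp q hq'
        by_contra hpq
        have : lineThrough (a c) v = spec i j :=
          line_unique hpq hp.1 hq'.1 hp.2 hq'.2
        have hac : a c ∉ spec i j := hq.2 ▸ hm i j hq.1
        exact hac (this ▸ self_mem_lineThrough (a c) v)
      · refine Set.Finite.subset Set.finite_empty ?_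
        exact Set.iUnion_subset fun h => absurd h hq
    refine Set.Finite.subset (hA.union hB) ?_
    rintro p ⟨hpL, hpC⟩
    rcases hpC with ⟨x, hx, rfl⟩ | hpspec
    · left
      exact ⟨x, ⟨hx, hdet c x v hpL⟩, rfl⟩
    · right
      simp only [Set.mem_iUnion] at hpspec ⊢
      obtain ⟨i, j, hq, hp⟩ := hpspec
      exact ⟨i, j, hq, hpL, hp⟩
  · -- coverage
    rw [Set.eq_univ_iff_forall]
    intro x
    rw [Set.mem_iUnion]
    by_cases hx : ∃ i j : Fin (n+2), i ≠ j ∧ x ∈ spec i j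
    · obtain ⟨i, j, hij, hmem⟩ := hx
      refine ⟨m i j, Or.inr ?_⟩
      simp only [Set.mem_iUnion]
      exact ⟨i, j, ⟨hij, rfl⟩, hmem⟩
    · push_neg at hx
      have hxP : x ∈ P := fun i j hij => hx i j hij
      exact ⟨σ ⟨x, hxP⟩, Or.inl ⟨⟨x, hxP⟩, rfl, rfl⟩⟩
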